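/- For every integer base g ≥ 3, there exists a constant c < 1 such that for all sufficiently large x, the number of integers n ≤ x that are a sum of two base g palindromes is at most c·x. -/

import Mathlib

def IsBasePalindrome (g n : ℕ) : Prop := Nat.digits g n = (Nat.digits g n).reverse

lemma digits_getElem {g : ℕ} (hg : 2 ≤ g) :
    ∀ (i n : ℕ) (h : i < (Nat.digits g n).length), (Nat.digits g n)[i] = n / g ^ i % g := by
  intro i
  induction i with
  | zero =>
    intro n h
    have hn : 0 < n := by
      rcases Nat.eq_zero_or_pos n with rfl | h'
      · simp at h
      · exact h'
    have hd := Nat.digits_def' (by omega : 1 < g) hn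
    simp [hd]
  | succ i ih =>
    intro n h
    have hn : 0 < n := by
      rcases Nat.eq_zero_or_pos n with rfl | h'
      · simp at h
      · exact h'
    have hd := Nat.digits_def' (by omega : 1 < g) hn
    have h' : i + 1 < (n % g :: Nat.digits g (n / g)).length := by rw [← hd]; exact h
    rw [List.getElem_of_eq hd h]
    simp only [List.getElem_cons_succ]
    rw [ih _ (by simpa using h'), Nat.div_div_eq_div_mul, ← pow_succ']

lemma pal_digit_eq {g p e : ℕ} (hg : 2 ≤ g) (hp : IsBasePalindrome g p)
    (h1 : g ^ e ≤ p) (h2 : p < g ^ (e + 1)) {i : ℕ} (hi : i ≤ e) :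
    p / g ^ i % g = p / g ^ (e - i) % g := by
  have hp0 : p ≠ 0 := by
    have : 0 < g ^ e := pow_pos (by omega : 0 < g) e
    omega
  have hlen : (Nat.digits g p).length = e + 1 := by
    rw [Nat.digits_len g p (by omega) hp0, Nat.log_eq_of_pow_le_of_lt_pow h1 h2]
  have hi' : i < (Nat.digits g p).length := by omega
  have key : (Nat.digits g p)[i]'hi' = (Nat.digits g p)[(Nat.digits g p).length - 1 - i]'(by omega) := by
    rw [List.getElem_of_eq hp hi']
    exact List.getElem_reverse _
  rw [← digits_getElem hg i p hi']
  have he : (Nat.digits g p).length - 1 - i = e - i := by omega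
  rw [key, digits_getElem hg _ p (by omega), he]

lemma pal_mod_pos {g p : ℕ} (hg : 2 ≤ g) (hp : IsBasePalindrome g p) (hp0 : p ≠ 0) :
    1 ≤ p % g := by
  set e := Nat.log g p with he
  have h1 : g ^ e ≤ p := Nat.pow_log_le_self g hp0
  have h2 : p < g ^ (e + 1) := Nat.lt_pow_succ_log_self (by omega) p
  have key := pal_digit_eq hg hp h1 h2 (i := 0) (Nat.zero_le e)
  have hdiv1 : 1 ≤ p / g ^ e := (Nat.one_le_div_iff (pow_pos (by omega : 0 < g) e)).mpr h1
  have hdiv2 : p / g ^ e < g := by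
    rw [Nat.div_lt_iff_lt_mul (pow_pos (by omega : 0 < g) e)]
    calc p < g ^ (e+1) := h2
    _ = g * g ^ e := by ring
  simp only [pow_zero, Nat.div_one, Nat.sub_zero] at key
  rw [Nat.mod_eq_of_lt hdiv2] at key
  omega

lemma pal_two_digits {g p e : ℕ} (hg : 2 ≤ g) (hp : IsBasePalindrome g p)
    (h1 : g ^ e ≤ p) (h2 : p < g ^ (e + 1)) (he : 1 ≤ e) :
    p % g = p / g ^ e % g ∧ p / g % g = p / g ^ (e - 1) % g := by
  constructor
  · have := pal_digit_eq hg hp h1 h2 (i := 0) (Nat.zero_le e)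
    simpa using this
  · have := pal_digit_eq hg hp h1 h2 (i := 1) he
    simpa using this

/-- The two lowest digits of a `j+4`-digit palindrome strictly between `g^(j+3)` and `g^(j+4)`. -/
lemma small_pal_struct {g : ℕ} (hg2 : 2 ≤ g) (j p : ℕ) (hp : IsBasePalindrome g p)
    (h1 : g ^ (j+3) < p) (h2 : p < g ^ (j+4)) :
    ∃ a a' : ℕ, p % g = a ∧ p / g % g = a' ∧ 1 ≤ a ∧ a < g ∧ a' < g ∧
      (g * a + a') * g ^ (j+2) ≤ p := by
  have hP : 0 < g ^ (j+2) := pow_pos (by omega : 0 < g) _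
  set A := p / g ^ (j+2) with hA
  refine ⟨A / g, A % g, ?_, ?_, ?_, ?_, ?_, ?_⟩
  · -- p % g = A / g
    have key := (pal_two_digits hg2 hp (le_of_lt h1) h2 (by omega)).1
    have hdd : p / g ^ (j+3) = A / g := by
      rw [hA, Nat.div_div_eq_div_mul, ← pow_succ]
    have hlt : A / g < g := by
      rw [Nat.div_lt_iff_lt_mul (by omega), hA]
      rw [Nat.div_lt_iff_lt_mul hP]
      calc p < g ^ (j+4) := h2
      _ = g * g * g ^ (j+2) := by ring
    rw [key, hdd, Nat.mod_eq_of_lt hlt]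
  · -- p / g % g = A % g
    have key := (pal_two_digits hg2 hp (le_of_lt h1) h2 (by omega)).2
    have : (j : ℕ) + 3 - 1 = j + 2 := by omega
    rw [key, this]
  · -- 1 ≤ A / g
    have : g ≤ A := by
      rw [hA, Nat.le_div_iff_mul_le hP]
      calc g * g ^ (j+2) = g ^ (j+3) := by ring
      _ ≤ p := le_of_lt h1
    exact (Nat.one_le_div_iff (by omega)).mpr this
  · -- A / g < g
    rw [Nat.div_lt_iff_lt_mul (by omega), hA, Nat.div_lt_iff_lt_mul hP]
    calc p < g ^ (j+4) := h2
    _ = g * g * g ^ (j+2) := by ring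
  · exact Nat.mod_lt _ (by omega)
  · have hdam : g * (A / g) + A % g = A := by
      exact Nat.div_add_mod A g
    rw [hdam, hA]
    exact Nat.div_mul_le_self _ _

lemma core {g : ℕ} (hg : 3 ≤ g) (j n : ℕ)
    (hn1 : g ^ (j+4) + g ^ (j+3) ≤ n) (hn2 : n < g ^ (j+4) + g ^ (j+3) + g ^ (j+2))
    (hmod : n % g ^ 2 = 1) (p q : ℕ) (hp : IsBasePalindrome g p) (hq : IsBasePalindrome g q)
    (hpq : n = p + q) : False := by
  have hg2 : 2 ≤ g := by omega
  have hP : 0 < g ^ (j+2) := pow_pos (by omega : 0 < g) _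
  have e32 : g ^ (j+3) = g * g ^ (j+2) := by ring
  have e42 : g ^ (j+4) = g * g * g ^ (j+2) := by ring
  have e43 : g ^ (j+4) = g * g ^ (j+3) := by ring
  have h23 : g ^ (j+2) < g ^ (j+3) := Nat.pow_lt_pow_right (by omega) (by omega)
  have h34 : g ^ (j+3) < g ^ (j+4) := Nat.pow_lt_pow_right (by omega) (by omega)
  have h342 : 2 * g ^ (j+3) ≤ g ^ (j+4) := by
    rw [e43]; exact Nat.mul_le_mul_right _ (by omega)
  have h45 : 2 * g ^ (j+4) ≤ g ^ (j+4+1) := by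
    calc 2 * g ^ (j+4) ≤ g * g ^ (j+4) := Nat.mul_le_mul_right _ (by omega)
    _ = g ^ (j+4+1) := by ring
  -- n % g = 1 and (n / g) % g = 0
  have hng : n % g = 1 := by
    have h := (Nat.mod_mod_of_dvd n (dvd_pow_self g (by norm_num : (2:ℕ) ≠ 0)))
    rw [hmod] at h
    rw [← h, Nat.mod_eq_of_lt (by omega)]
  have hng2 : n / g % g = 0 := by
    have h : n % (g * g) / g = n / g % g := Nat.mod_mul_right_div_self n g g
    rw [← h, ← pow_two, hmod, Nat.div_eq_of_lt (by omega)]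
  -- the case where one summand has j+5 digits
  have bigCase : ∀ a b : ℕ, IsBasePalindrome g a → IsBasePalindrome g b → n = a + b →
      g ^ (j+4) ≤ a → False := by
    intro a b hpa hpb hab ha
    have haub : a ≤ n := by omega
    have ha4 : a < 2 * g ^ (j+4) := by omega
    have ha5 : a < g ^ ((j+4) + 1) := by omega
    have hdiva : a / g ^ (j+4) = 1 := by
      apply Nat.div_eq_of_lt_le (by omega)
      omega
    have hamod : a % g = 1 := by
      have key := (pal_two_digits hg2 hpa ha ha5 (by omega)).1
      rw [key, hdiva, Nat.mod_eq_of_lt (by omega)]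
    have hbmod : b % g = 0 := by
      have h : (a % g + b % g) % g = n % g := by rw [hab]; exact (Nat.add_mod a b g).symm
      rw [hamod, hng] at h
      have hblt : b % g < g := Nat.mod_lt _ (by omega)
      rcases Nat.lt_or_ge (1 + b % g) g with hc | hc
      · rw [Nat.mod_eq_of_lt hc] at h; omega
      · have hc2 : 1 + b % g = g := by omega
        rw [hc2, Nat.mod_self] at h; omega
    rcases Nat.eq_zero_or_pos b with rfl | hb0
    · -- n = a is a palindrome: second digit contradiction
      have hna : n = a := by omega
      subst hna
      have key := (pal_two_digits hg2 hpa ha ha5 (by omega)).2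
      have : (j : ℕ) + 4 - 1 = j + 3 := by omega
      rw [this] at key
      have hdiv3 : n / g ^ (j+3) = g + 1 := by
        apply Nat.div_eq_of_lt_le
        · calc (g+1) * g ^ (j+3) = g ^ (j+4) + g ^ (j+3) := by ring
          _ ≤ n := hn1
        · calc n < g ^ (j+4) + g ^ (j+3) + g ^ (j+2) := hn2
          _ ≤ g ^ (j+4) + g ^ (j+3) + g ^ (j+3) := by omega
          _ = (g+1+1) * g ^ (j+3) := by ring
      rw [hng2, hdiv3] at key
      rw [Nat.add_mod_left, Nat.mod_eq_of_lt (by omega)] at key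
      exact absurd key (by omega)
    · exact absurd hbmod (by have := pal_mod_pos hg2 hpb (by omega); omega)
  -- now the main case split
  rcases Nat.lt_or_ge p (g ^ (j+4)) with hps | hpb'
  · rcases Nat.lt_or_ge q (g ^ (j+4)) with hqs | hqb'
    · -- both summands have j+4 digits
      have hp1 : g ^ (j+3) < p := by omega
      have hq1 : g ^ (j+3) < q := by omega
      obtain ⟨a, a', hpa, hpa', ha1, ha2, ha3, hple⟩ := small_pal_struct hg2 j p hp hp1 hps
      obtain ⟨b, b', hqa, hqa', hb1, hb2, hb3, hqle⟩ := small_pal_struct hg2 j q hq hq1 hqs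
      -- a + b = g + 1
      have hs : (a + b) % g = 1 := by
        have h : (p % g + q % g) % g = n % g := by rw [hpq]; exact (Nat.add_mod p q g).symm
        rw [hpa, hqa, hng] at h; exact h
      have hab : a + b = g + 1 := by
        rcases Nat.lt_or_ge (a + b) g with hc | hc
        · rw [Nat.mod_eq_of_lt hc] at hs; omega
        · rw [Nat.mod_eq_sub_mod hc, Nat.mod_eq_of_lt (by omega)] at hs
          omega
      -- a' + b' + 1 = g
      have hpmod2 : p % g ^ 2 = a + g * a' := by
        rw [pow_two, Nat.mod_mul, hpa, hpa']
      have hqmod2 : q % g ^ 2 = b + g * b' := by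
        rw [pow_two, Nat.mod_mul, hqa, hqa']
      have hv : (g + 1 + g * (a' + b')) % g ^ 2 = 1 := by
        have h : (p % g ^ 2 + q % g ^ 2) % g ^ 2 = n % g ^ 2 := by
          rw [hpq]; exact (Nat.add_mod p q _).symm
        rw [hpmod2, hqmod2, hmod] at h
        have heq : g + 1 + g * (a' + b') = a + g * a' + (b + g * b') := by
          rw [← hab]; ring
        rw [heq]; exact h
      set t := a' + b' with htdef
      have hgg : g ^ 2 = g * g := by ring
      have hmul : g * t + 2 * g ≤ 2 * (g * g) := by
        calc g * t + 2 * g = g * (t + 2) := by ring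
        _ ≤ g * (2 * g) := Nat.mul_le_mul_left g (by omega)
        _ = 2 * (g * g) := by ring
      have hvlt : g + 1 + g * t < 2 * (g * g) := by omega
      have hvge : g * g ≤ g + 1 + g * t := by
        by_contra hcon
        push_neg at hcon
        rw [Nat.mod_eq_of_lt (by omega)] at hv
        omega
      rw [hgg, Nat.mod_eq_sub_mod hvge, Nat.mod_eq_of_lt (by omega)] at hv
      have ht : t + 1 = g := by
        have h1 : g * (t + 1) = g * g := by
          rw [Nat.mul_add, Nat.mul_one]; omega
        exact Nat.eq_of_mul_eq_mul_left (by omega) h1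
      -- final size contradiction
      have hcoef : g * a + a' + (g * b + b') + 1 = g * g + 2 * g := by
        calc g * a + a' + (g * b + b') + 1 = g * (a + b) + (a' + b' + 1) := by ring
        _ = g * (g + 1) + g := by rw [hab, ← htdef, ht]
        _ = g * g + 2 * g := by ring
      have hbig : (g * g + 2 * g) * g ^ (j+2) ≤ n + g ^ (j+2) := by
        calc (g * g + 2 * g) * g ^ (j+2) = (g * a + a') * g ^ (j+2) + (g * b + b') * g ^ (j+2)
            + g ^ (j+2) := by rw [← hcoef]; ring
        _ ≤ p + q + g ^ (j+2) := by
            have := Nat.add_le_add hple hqle; omega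
        _ = n + g ^ (j+2) := by omega
      have hsmall : n + g ^ (j+2) < (g * g + g + 2) * g ^ (j+2) := by
        calc n + g ^ (j+2) < g ^ (j+4) + g ^ (j+3) + g ^ (j+2) + g ^ (j+2) := by omega
        _ = (g * g + g + 2) * g ^ (j+2) := by rw [e42, e32]; ring
      have hfin : g * g + 2 * g < g * g + g + 2 :=
        lt_of_mul_lt_mul_right (lt_of_le_of_lt hbig hsmall) (Nat.zero_le _)
      omega
    · exact bigCase q p hq hp (by omega) hqb'
  · exact bigCase p q hp hq hpq hpb'

theorem sums_of_two_palindromes_not_full_density (g : ℕ) (hg : 3 ≤ g) :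
    ∃ c : ℝ, c < 1 ∧ ∃ x₀ : ℝ, ∀ x : ℝ, x₀ ≤ x →
      ((({n : ℕ | (n : ℝ) ≤ x ∧ ∃ p q : ℕ, IsBasePalindrome g p ∧ IsBasePalindrome g q ∧
        n = p + q}).ncard : ℝ)) ≤ c * x := by
  have hgR : (3:ℝ) ≤ (g:ℝ) := by exact_mod_cast hg
  have hg6 : (0:ℝ) < (g:ℝ)^6 := by positivity
  refine ⟨1 - 1/(2*(g:ℝ)^6), by
    have h : (0:ℝ) < 1/(2*(g:ℝ)^6) := by positivity
    linarith, ((2*g^7 : ℕ) : ℝ), ?_⟩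
  intro x hx
  have hx0 : (0:ℝ) ≤ x := le_trans (by positivity) hx
  set m := ⌊x⌋₊ with hmdef
  have hmx : (m:ℝ) ≤ x := Nat.floor_le hx0
  have hxm : x < m + 1 := Nat.lt_floor_add_one x
  have hmge : 2 * g^7 ≤ m := Nat.le_floor hx
  have hm0 : m ≠ 0 := by
    have h7 : 0 < 2*g^7 := by positivity
    omega
  set t := Nat.log g m with htdef
  have ht1 : g ^ t ≤ m := Nat.pow_log_le_self g hm0
  have ht2 : m < g ^ (t+1) := Nat.lt_pow_succ_log_self (by omega) m
  have ht7 : 7 ≤ t := by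
    have h7 : g ^ 7 ≤ m := by omega
    exact (Nat.le_log_iff_pow_le (by omega) hm0).mpr h7
  set j := t - 5 with hjdef
  have hj6 : j + 6 = t + 1 := by omega
  have hj5 : j + 5 = t := by omega
  have hg2pos : 0 < g^2 := by positivity
  have hg21 : 1 < g^2 := by
    have : 3*3 ≤ g*g := Nat.mul_le_mul hg hg
    have h2 : g^2 = g*g := by ring
    omega
  set f : ℕ → ℕ := fun i => g^(j+4) + g^(j+3) + i * g^2 + 1 with hf
  set B : Finset ℕ := (Finset.range (g^j)).image f with hB
  have hcard : B.card = g ^ j := by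
    rw [hB, Finset.card_image_of_injective _ ?_, Finset.card_range]
    intro i1 i2 h
    simp only [hf] at h
    have : i1 * g^2 = i2 * g^2 := by omega
    exact Nat.eq_of_mul_eq_mul_right hg2pos this
  have hfl : ∀ i, i < g^j → f i < g^(j+4) + g^(j+3) + g^(j+2) := by
    intro i hi
    have h1 : (i+1) * g^2 ≤ g^j * g^2 := Nat.mul_le_mul_right _ (by omega)
    have h2 : g^j * g^2 = g^(j+2) := by ring
    have h3 : (i+1) * g^2 = i * g^2 + g^2 := by ring
    simp only [hf]
    omega
  have hfm : ∀ i, i < g^j → f i ≤ m := by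
    intro i hi
    have h1 := hfl i hi
    have h34 : g ^ (j+3) ≤ g ^ (j+4) := Nat.pow_le_pow_right (by omega) (by omega)
    have h24 : g ^ (j+2) ≤ g ^ (j+4) := Nat.pow_le_pow_right (by omega) (by omega)
    have h5 : 3 * g^(j+4) ≤ g * g^(j+4) := Nat.mul_le_mul_right _ (by omega)
    have h6 : g * g^(j+4) = g^(j+5) := by ring
    have h7 : g^(j+5) = g^t := by rw [hj5]
    omega
  have hsub : {n : ℕ | (n : ℝ) ≤ x ∧ ∃ p q : ℕ, IsBasePalindrome g p ∧ IsBasePalindrome g q ∧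
      n = p + q} ⊆ ↑(Finset.range (m+1) \ B) := by
    intro n hn
    obtain ⟨hnx, p, q, hp, hq, hpq⟩ := hn
    simp only [Finset.coe_sdiff, Set.mem_diff, Finset.mem_coe, Finset.mem_range]
    constructor
    · have : n ≤ m := Nat.le_floor hnx
      omega
    · intro hnB
      rw [hB] at hnB
      simp only [Finset.mem_image, Finset.mem_range] at hnB
      obtain ⟨i, hi, hfi⟩ := hnB
      have hn1 : g^(j+4) + g^(j+3) ≤ n := by simp only [hf] at hfi; omega
      have hn2 : n < g^(j+4) + g^(j+3) + g^(j+2) := by rw [← hfi]; exact hfl i hi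
      have hmod : n % g^2 = 1 := by
        have he : n = g^2 * (g^(j+2) + g^(j+1) + i) + 1 := by
          rw [← hfi]; simp only [hf]; ring
        rw [he, Nat.mul_add_mod, Nat.mod_eq_of_lt hg21]
      exact core hg j n hn1 hn2 hmod p q hp hq hpq
  have hncard : ({n : ℕ | (n : ℝ) ≤ x ∧ ∃ p q : ℕ, IsBasePalindrome g p ∧ IsBasePalindrome g q ∧
      n = p + q}).ncard ≤ (m + 1) - g^j := by
    have h1 := Set.ncard_le_ncard hsub (Finset.range (m+1) \ B).finite_toSet
    rw [Set.ncard_coe_finset] at h1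
    have hBsub : B ⊆ Finset.range (m+1) := by
      intro b hb
      rw [hB] at hb
      simp only [Finset.mem_image, Finset.mem_range] at hb
      obtain ⟨i, hi, hfi⟩ := hb
      rw [Finset.mem_range, ← hfi]
      have := hfm i hi
      omega
    rw [Finset.card_sdiff_of_subset hBsub, Finset.card_range, hcard] at h1
    exact h1
  have hgjm : g^j ≤ m := le_trans (Nat.pow_le_pow_right (by omega) (by omega)) ht1
  -- move to the reals
  have hcast : (((m + 1) - g^j : ℕ) : ℝ) = (m:ℝ) + 1 - ((g:ℝ))^j := by
    rw [Nat.cast_sub (by omega)]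
    push_cast
    ring
  have hstep1 : (({n : ℕ | (n : ℝ) ≤ x ∧ ∃ p q : ℕ, IsBasePalindrome g p ∧ IsBasePalindrome g q ∧
      n = p + q}).ncard : ℝ) ≤ (m:ℝ) + 1 - (g:ℝ)^j := by
    rw [← hcast]
    exact_mod_cast hncard
  have hxlt : x < (g:ℝ)^(t+1) := by
    have h1 : ((m+1 : ℕ) : ℝ) ≤ ((g^(t+1) : ℕ) : ℝ) := by exact_mod_cast ht2
    push_cast at h1
    linarith
  have hgj6 : (g:ℝ)^j * (g:ℝ)^6 = (g:ℝ)^(t+1) := by rw [← pow_add, hj6]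
  have hgjlow : x / (g:ℝ)^6 < (g:ℝ)^j := by
    rw [div_lt_iff₀ hg6]
    linarith
  have hx2 : 2*(g:ℝ)^6 ≤ x := by
    push_cast at hx
    nlinarith [hx]
  have hu : (1:ℝ) ≤ x/(2*(g:ℝ)^6) := (one_le_div (by positivity)).mpr hx2
  have hdouble : x / (g:ℝ)^6 = 2 * (x/(2*(g:ℝ)^6)) := by ring
  have hrhs : (1 - 1/(2*(g:ℝ)^6)) * x = x - x/(2*(g:ℝ)^6) := by ring
  rw [hrhs]
  linarith
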